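/- Let F be a field and let c, d ∈ F. Define φ̂(u₁,u₂) = ((c + d(u₁+1)u₂)/u₁, (c + d·u₂)/(u₁u₂)) and ψ̂(u₁,u₂) = (ū₁, ū₂) with ū₁ = (d·u₂+c)(u₂+d)/(u₁u₂), ū₂ = (ū₁+c)/(u₂(ū₁+1)). Then for every point (u₁,u₂) with nonzero coordinates at which every denominator occurring in the compositions ψ̂∘φ̂ and φ̂∘ψ̂ is nonzero, the two maps commute: ψ̂(φ̂(u₁,u₂)) = φ̂(ψ̂(u₁,u₂)). -/

import Mathlib

/-- The deformed A₃ map `φ̂(u₁,u₂) = ((c + d(u₁+1)u₂)/u₁, (c + d·u₂)/(u₁u₂))`. -/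
noncomputable def phiHat {F : Type*} [Field F] (c d : F) (u : F × F) : F × F :=
  ((c + d * (u.1 + 1) * u.2) / u.1, (c + d * u.2) / (u.1 * u.2))

/-- The QRT map `ψ̂(u₁,u₂) = (ū₁, ū₂)` with `ū₁ = (d·u₂+c)(u₂+d)/(u₁u₂)` and
`ū₂ = (ū₁+c)/(u₂(ū₁+1))`. -/
noncomputable def psiHat {F : Type*} [Field F] (c d : F) (u : F × F) : F × F :=
  ((d * u.2 + c) * (u.2 + d) / (u.1 * u.2),
    ((d * u.2 + c) * (u.2 + d) / (u.1 * u.2) + c) /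
      (u.2 * ((d * u.2 + c) * (u.2 + d) / (u.1 * u.2) + 1)))

set_option maxHeartbeats 1600000 in
/-- the deformed A₃ map `φ̂` and the QRT map `ψ̂` commute at every
point with nonzero coordinates at which all the denominators occurring in the
two compositions are nonzero. -/
theorem deformed_a3_commutes_with_qrt {F : Type*} [Field F] (c d u₁ u₂ : F)
    (h₁ : u₁ ≠ 0) (h₂ : u₂ ≠ 0)
    -- denominators for ψ̂ ∘ φ̂:
    (hA : (phiHat c d (u₁, u₂)).1 ≠ 0)
    (hB : (phiHat c d (u₁, u₂)).2 ≠ 0)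
    (hAB : (psiHat c d (phiHat c d (u₁, u₂))).1 + 1 ≠ 0)
    -- denominators for φ̂ ∘ ψ̂:
    (hP : (psiHat c d (u₁, u₂)).1 ≠ 0)
    (hP1 : (psiHat c d (u₁, u₂)).1 + 1 ≠ 0)
    (hQ : (psiHat c d (u₁, u₂)).2 ≠ 0) :
    psiHat c d (phiHat c d (u₁, u₂)) = phiHat c d (psiHat c d (u₁, u₂)) := by
  simp only [phiHat, psiHat] at *
  have hu12 : u₁ * u₂ ≠ 0 := mul_ne_zero h₁ h₂
  have hA' : c + d * (u₁ + 1) * u₂ ≠ 0 := (div_ne_zero_iff.mp hA).1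
  have hB' : c + d * u₂ ≠ 0 := (div_ne_zero_iff.mp hB).1
  have hP' : (d * u₂ + c) * (u₂ + d) ≠ 0 := (div_ne_zero_iff.mp hP).1
  have hdc : d * u₂ + c ≠ 0 := fun h => hP' (by rw [h]; ring)
  have hud : u₂ + d ≠ 0 := fun h => hP' (by rw [h]; ring)
  field_simp at hP1 hQ hAB
  have hP1' : (d * u₂ + c) * (u₂ + d) + u₂ * u₁ ≠ 0 := (div_ne_zero_iff.mp hP1).1
  have hQ' : (d * u₂ + c) * (u₂ + d) + u₂ * c * u₁ ≠ 0 := (div_ne_zero_iff.mp hQ).1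
  have hA'' : c + d * u₂ * (u₁ + 1) ≠ 0 := fun h => hA' (by linear_combination h)
  rw [Prod.ext_iff]
  constructor
  · field_simp
    ring
  · field_simp
    have hD : (d * (c + d * u₂) + c * u₂ * u₁) * (c + d * u₂ + d * u₂ * u₁) + u₂ * (c + d * u₂) * (c + d * u₂ * (u₁ + 1)) ≠ 0 := by
      intro h
      apply hAB
      rw [div_eq_zero_iff, div_add' _ _ _ hA'', div_eq_zero_iff]
      left; left
      linear_combination h
    rw [div_eq_div_iff hD (show (d * u₂ + c) * (u₂ + d) + c * u₂ * u₁ ≠ 0 from fun h => hQ' (by linear_combination h))]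
    ring
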